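/- Let W ∈ C²((0,∞)) satisfy W'(1) + 2W'(2) = 0. Then the Hessian of the 4-point energy E₄[V] at the unit square q has the following eigenvalues: 0 (on translations (v,v,v,v)), 4(W'(1)+W''(1)) (on (v,−v,v,−v)), 2W'(1)+4W'(2)+4W''(1)+16W''(2) (on the dilation direction q), 2W'(1)+4W'(2) (on the rotation direction (q₂,q₃,q₄,q₁)), 2W'(1)+4W'(2)+4W''(1) (on (q₄,q₃,q₂,q₁)), and 2W'(1)+4W'(2)+16W''(2) (on (q₁,q₄,q₃,q₂)). -/

import Mathlib

open scoped RealInnerProductSpace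

/-- The configuration space of 4 labeled points in the plane, with its Euclidean
(inner-product) structure. -/
abbrev Config4 : Type := PiLp 2 (fun _ : Fin 4 => EuclideanSpace ℝ (Fin 2))

/-- The 4-point energy E₄[V](x₁,…,x₄) = (1/2)∑ᵢ W(|xᵢ−xᵢ₊₁|²) + W(|x₁−x₃|²) + W(|x₂−x₄|²),
indices mod 4, where W(s) = V(√s). -/
noncomputable def energy4 (W : ℝ → ℝ) (x : Config4) : ℝ :=
  (1 / 2) * ∑ i : Fin 4, W (dist (x i) (x (i + 1)) ^ 2) +
    W (dist (x 0) (x 2) ^ 2) + W (dist (x 1) (x 3) ^ 2)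

/-- The unit square configuration q = (q₁,q₂,q₃,q₄) = (1/2)((−1,−1),(−1,1),(1,1),(1,−1)). -/
noncomputable def unitSquare : Config4 := WithLp.toLp 2 fun i =>
  (WithLp.equiv 2 (Fin 2 → ℝ)).symm
    (![![-1/2, -1/2], ![-1/2, 1/2], ![1/2, 1/2], ![1/2, -1/2]] i)

/-- The Hessian bilinear form of the 4-point energy at the unit square. -/
noncomputable def hess4 (W : ℝ → ℝ) (u w : Config4) : ℝ :=
  fderiv ℝ (fderiv ℝ (energy4 W)) unitSquare u w

/-- `u` is an eigenvector of the Hessian of E₄ at the unit square with eigenvalue `lam`. -/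
def IsHessEigen (W : ℝ → ℝ) (u : Config4) (lam : ℝ) : Prop :=
  ∀ w : Config4, hess4 W u w = lam * ⟪u, w⟫

/- ### Auxiliary machinery for computing the Hessian -/

section Aux

abbrev E2 := EuclideanSpace ℝ (Fin 2)

/-- The difference map x ↦ x i − x j as a continuous linear map. -/
noncomputable def Lpair (i j : Fin 4) : Config4 →L[ℝ] E2 :=
  (PiLp.proj (𝕜 := ℝ) 2 (fun _ : Fin 4 => EuclideanSpace ℝ (Fin 2)) i) -
    (PiLp.proj (𝕜 := ℝ) 2 (fun _ : Fin 4 => EuclideanSpace ℝ (Fin 2)) j)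

variable {F : Type*} [NormedAddCommGroup F] [InnerProductSpace ℝ F]
variable {E : Type*} [NormedAddCommGroup E] [InnerProductSpace ℝ E]

/-- The continuous linear map x ↦ (w ↦ ⟪L x, L w⟫). -/
noncomputable def TL (L : F →L[ℝ] E) : F →L[ℝ] (F →L[ℝ] ℝ) :=
  ((ContinuousLinearMap.compSL F E ℝ (RingHom.id ℝ) (RingHom.id ℝ)).flip L).comp
    ((innerSL ℝ (E := E)).comp L)

@[simp] lemma TL_apply (L : F →L[ℝ] E) (x w : F) : TL L x w = ⟪L x, L w⟫ := rfl

lemma hasFDerivAt_normsq (L : F →L[ℝ] E) (x : F) :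
    HasFDerivAt (fun y => ‖L y‖ ^ 2) ((2 : ℝ) • TL L x) x := by
  have h : HasFDerivAt (fun y => ⟪L y, L y⟫)
      ((fderivInnerCLM ℝ (L x, L x)).comp ((L : F →L[ℝ] E).prod L)) x :=
    (L.hasFDerivAt).inner ℝ (L.hasFDerivAt)
  have h2 : (fun y => ⟪L y, L y⟫) = fun y => ‖L y‖ ^ 2 := by
    funext y; rw [real_inner_self_eq_norm_sq]
  rw [h2] at h
  refine h.congr_fderiv ?_
  ext w
  simp [TL, real_inner_comm]
  ring

lemma hasFDerivAt_pair (Wf : ℝ → ℝ) (L : F →L[ℝ] E) (x : F)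
    (hd : HasDerivAt Wf (deriv Wf (‖L x‖ ^ 2)) (‖L x‖ ^ 2)) :
    HasFDerivAt (fun y => Wf (‖L y‖ ^ 2)) ((2 * deriv Wf (‖L x‖ ^ 2)) • TL L x) x := by
  have := hd.comp_hasFDerivAt x (hasFDerivAt_normsq L x)
  refine this.congr_fderiv ?_
  rw [smul_smul, mul_comm]

/-- The first-derivative map of a single pair interaction. -/
noncomputable def D1 (Wf : ℝ → ℝ) (L : F →L[ℝ] E) (x : F) : F →L[ℝ] ℝ :=
  (2 * deriv Wf (‖L x‖ ^ 2)) • TL L x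

/-- The Hessian of a single pair interaction. -/
noncomputable def hessPair (Wf : ℝ → ℝ) (L : F →L[ℝ] E) (x : F) : F →L[ℝ] F →L[ℝ] ℝ :=
  (2 * deriv Wf (‖L x‖ ^ 2)) • TL L +
    ((4 * deriv (deriv Wf) (‖L x‖ ^ 2)) • TL L x).smulRight (TL L x)

@[simp] lemma hessPair_apply (Wf : ℝ → ℝ) (L : F →L[ℝ] E) (x u w : F) :
    hessPair Wf L x u w = 2 * deriv Wf (‖L x‖ ^ 2) * ⟪L u, L w⟫ +
      4 * deriv (deriv Wf) (‖L x‖ ^ 2) * ⟪L x, L u⟫ * ⟪L x, L w⟫ := by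
  simp [hessPair]

lemma hasFDerivAt_D1 (Wf : ℝ → ℝ) (L : F →L[ℝ] E) (x : F)
    (hd2 : HasDerivAt (deriv Wf) (deriv (deriv Wf) (‖L x‖ ^ 2)) (‖L x‖ ^ 2)) :
    HasFDerivAt (fun y => D1 Wf L y) (hessPair Wf L x) x := by
  have hc : HasFDerivAt (fun y => 2 * deriv Wf (‖L y‖ ^ 2))
      ((4 * deriv (deriv Wf) (‖L x‖ ^ 2)) • TL L x) x := by
    have := (hd2.const_mul (2 : ℝ)).comp_hasFDerivAt x (hasFDerivAt_normsq L x)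
    refine this.congr_fderiv ?_
    rw [smul_smul]; congr 1; ring
  have hf : HasFDerivAt (fun y => TL L y) (TL L) x := (TL L).hasFDerivAt
  exact hc.smul hf

@[simp] lemma Lpair_apply (i j : Fin 4) (y : Config4) : Lpair i j y = y i - y j := rfl
@[simp] lemma E2_sub_apply (a b : E2) (k : Fin 2) : (a - b) k = a k - b k := rfl
@[simp] lemma E2_neg_apply (a : E2) (k : Fin 2) : (-a) k = -(a k) := rfl

@[simp] lemma us00 : unitSquare 0 0 = -1/2 := rfl
@[simp] lemma us01 : unitSquare 0 1 = -1/2 := rfl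
@[simp] lemma us10 : unitSquare 1 0 = -1/2 := rfl
@[simp] lemma us11 : unitSquare 1 1 = 1/2 := rfl
@[simp] lemma us20 : unitSquare 2 0 = 1/2 := rfl
@[simp] lemma us21 : unitSquare 2 1 = 1/2 := rfl
@[simp] lemma us30 : unitSquare 3 0 = 1/2 := rfl
@[simp] lemma us31 : unitSquare 3 1 = -1/2 := rfl

lemma inner2 (a b : E2) : ⟪a, b⟫ = a 0 * b 0 + a 1 * b 1 := by
  simp [PiLp.inner_apply, Fin.sum_univ_two, RCLike.inner_apply, conj_trivial, mul_comm]

lemma norm2_eq (a : E2) : ‖a‖ ^ 2 = a 0 ^ 2 + a 1 ^ 2 := by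
  rw [← real_inner_self_eq_norm_sq, inner2]; try ring

lemma innerC (u w : Config4) :
    ⟪u, w⟫ = ⟪u 0, w 0⟫ + ⟪u 1, w 1⟫ + ⟪u 2, w 2⟫ + ⟪u 3, w 3⟫ := by
  simp [PiLp.inner_apply, Fin.sum_univ_four]

lemma rr01 : ‖Lpair 0 1 unitSquare‖ ^ 2 = 1 := by rw [norm2_eq]; norm_num
lemma rr12 : ‖Lpair 1 2 unitSquare‖ ^ 2 = 1 := by rw [norm2_eq]; norm_num
lemma rr23 : ‖Lpair 2 3 unitSquare‖ ^ 2 = 1 := by rw [norm2_eq]; norm_num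
lemma rr30 : ‖Lpair 3 0 unitSquare‖ ^ 2 = 1 := by rw [norm2_eq]; norm_num
lemma rr02 : ‖Lpair 0 2 unitSquare‖ ^ 2 = 2 := by rw [norm2_eq]; norm_num
lemma rr13 : ‖Lpair 1 3 unitSquare‖ ^ 2 = 2 := by rw [norm2_eq]; norm_num

lemma rn01 : ‖unitSquare 0 - unitSquare 1‖ ^ 2 = (1 : ℝ) := rr01
lemma rn12 : ‖unitSquare 1 - unitSquare 2‖ ^ 2 = (1 : ℝ) := rr12
lemma rn23 : ‖unitSquare 2 - unitSquare 3‖ ^ 2 = (1 : ℝ) := rr23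
lemma rn30 : ‖unitSquare 3 - unitSquare 0‖ ^ 2 = (1 : ℝ) := rr30
lemma rn02 : ‖unitSquare 0 - unitSquare 2‖ ^ 2 = (2 : ℝ) := rr02
lemma rn13 : ‖unitSquare 1 - unitSquare 3‖ ^ 2 = (2 : ℝ) := rr13

lemma energy4_eq (W : ℝ → ℝ) : energy4 W = fun x =>
    (1/2) * (W (‖Lpair 0 1 x‖ ^ 2) + W (‖Lpair 1 2 x‖ ^ 2) + W (‖Lpair 2 3 x‖ ^ 2)
      + W (‖Lpair 3 0 x‖ ^ 2)) + W (‖Lpair 0 2 x‖ ^ 2) + W (‖Lpair 1 3 x‖ ^ 2) := by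
  funext x
  have h4 : (3 : Fin 4) + 1 = 0 := rfl
  simp [energy4, Fin.sum_univ_four, dist_eq_norm, h4]
  try ring

/-- The gradient map of the energy, valid near the unit square. -/
noncomputable def Gmap (W : ℝ → ℝ) (x : Config4) : Config4 →L[ℝ] ℝ :=
  (1/2 : ℝ) • (D1 W (Lpair 0 1) x + D1 W (Lpair 1 2) x + D1 W (Lpair 2 3) x
    + D1 W (Lpair 3 0) x) + D1 W (Lpair 0 2) x + D1 W (Lpair 1 3) x

lemma hdW {W : ℝ → ℝ} (hW : ContDiffOn ℝ 2 W (Set.Ioi 0)) {r : ℝ} (hr : 0 < r) :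
    HasDerivAt W (deriv W r) r :=
  ((hW.differentiableOn (by norm_num)).differentiableAt (Ioi_mem_nhds hr)).hasDerivAt

lemma hdW2 {W : ℝ → ℝ} (hW : ContDiffOn ℝ 2 W (Set.Ioi 0)) {r : ℝ} (hr : 0 < r) :
    HasDerivAt (deriv W) (deriv (deriv W) r) r := by
  have h : ContDiffOn ℝ 1 (deriv W) (Set.Ioi 0) :=
    hW.deriv_of_isOpen isOpen_Ioi (by norm_num)
  exact ((h.differentiableOn (by norm_num)).differentiableAt (Ioi_mem_nhds hr)).hasDerivAt

lemma energy4_hasFDerivAt {W : ℝ → ℝ} (hW : ContDiffOn ℝ 2 W (Set.Ioi 0)) (x : Config4)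
    (h01 : 0 < ‖Lpair 0 1 x‖ ^ 2) (h12 : 0 < ‖Lpair 1 2 x‖ ^ 2)
    (h23 : 0 < ‖Lpair 2 3 x‖ ^ 2) (h30 : 0 < ‖Lpair 3 0 x‖ ^ 2)
    (h02 : 0 < ‖Lpair 0 2 x‖ ^ 2) (h13 : 0 < ‖Lpair 1 3 x‖ ^ 2) :
    HasFDerivAt (energy4 W) (Gmap W x) x := by
  rw [energy4_eq]
  exact ((((((hasFDerivAt_pair W _ x (hdW hW h01)).add (hasFDerivAt_pair W _ x (hdW hW h12))).add
    (hasFDerivAt_pair W _ x (hdW hW h23))).add (hasFDerivAt_pair W _ x (hdW hW h30))).const_mul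
    (1/2)).add (hasFDerivAt_pair W _ x (hdW hW h02))).add (hasFDerivAt_pair W _ x (hdW hW h13))

/-- The Hessian of the energy at the unit square, as a sum over the six pairs. -/
noncomputable def Hq (W : ℝ → ℝ) : Config4 →L[ℝ] Config4 →L[ℝ] ℝ :=
  (1/2 : ℝ) • (hessPair W (Lpair 0 1) unitSquare + hessPair W (Lpair 1 2) unitSquare
    + hessPair W (Lpair 2 3) unitSquare + hessPair W (Lpair 3 0) unitSquare)
    + hessPair W (Lpair 0 2) unitSquare + hessPair W (Lpair 1 3) unitSquare

lemma fderiv2_energy4 {W : ℝ → ℝ} (hW : ContDiffOn ℝ 2 W (Set.Ioi 0)) :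
    fderiv ℝ (fderiv ℝ (energy4 W)) unitSquare = Hq W := by
  haveI : ContinuousSMul ℝ Config4 := IsBoundedSMul.continuousSMul
  have hev : fderiv ℝ (energy4 W) =ᶠ[nhds unitSquare] Gmap W := by
    have ev : ∀ (i j : Fin 4), 0 < ‖Lpair i j unitSquare‖ ^ 2 →
        ∀ᶠ x in nhds unitSquare, 0 < ‖Lpair i j x‖ ^ 2 := by
      intro i j h
      have hp : Continuous fun x : Config4 => ‖Lpair i j x‖ ^ 2 :=
        ((Lpair i j).continuous.norm).pow 2
      exact hp.continuousAt.eventually_mem (isOpen_Ioi.mem_nhds h)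
    filter_upwards [ev 0 1 (by rw [rr01]; norm_num), ev 1 2 (by rw [rr12]; norm_num),
      ev 2 3 (by rw [rr23]; norm_num), ev 3 0 (by rw [rr30]; norm_num),
      ev 0 2 (by rw [rr02]; norm_num), ev 1 3 (by rw [rr13]; norm_num)] with x h1 h2 h3 h4 h5 h6
    exact (energy4_hasFDerivAt hW x h1 h2 h3 h4 h5 h6).fderiv
  have h2 : HasFDerivAt (Gmap W) (Hq W) unitSquare := by
    have e1 := hasFDerivAt_D1 W (Lpair 0 1) unitSquare (hdW2 hW (by rw [rr01]; norm_num))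
    have e2 := hasFDerivAt_D1 W (Lpair 1 2) unitSquare (hdW2 hW (by rw [rr12]; norm_num))
    have e3 := hasFDerivAt_D1 W (Lpair 2 3) unitSquare (hdW2 hW (by rw [rr23]; norm_num))
    have e4 := hasFDerivAt_D1 W (Lpair 3 0) unitSquare (hdW2 hW (by rw [rr30]; norm_num))
    have e5 := hasFDerivAt_D1 W (Lpair 0 2) unitSquare (hdW2 hW (by rw [rr02]; norm_num))
    have e6 := hasFDerivAt_D1 W (Lpair 1 3) unitSquare (hdW2 hW (by rw [rr13]; norm_num))
    exact (((((e1.add e2).add e3).add e4).const_smul (1/2 : ℝ)).add e5).add e6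
  rw [hev.fderiv_eq]
  exact h2.fderiv

end Aux

/-- Eigenvalues and eigenvectors of the Hessian of E₄[V] at the unit square for a C²
potential W with W'(1) + 2W'(2) = 0: 0 on translations; 4(W'(1)+W''(1)) on (v,−v,v,−v);
2W'(1)+4W'(2)+4W''(1)+16W''(2) on the dilation direction q;
2W'(1)+4W'(2) on the rotation direction (q₂,q₃,q₄,q₁);
2W'(1)+4W'(2)+4W''(1) on (q₄,q₃,q₂,q₁); 2W'(1)+4W'(2)+16W''(2) on (q₁,q₄,q₃,q₂). -/
theorem hessian_eigenvalues_unit_square (W : ℝ → ℝ)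
    (hW : ContDiffOn ℝ 2 W (Set.Ioi 0))
    (hcrit : deriv W 1 + 2 * deriv W 2 = 0) :
    (∀ v : EuclideanSpace ℝ (Fin 2),
        IsHessEigen W (WithLp.toLp 2 fun _ => v) 0) ∧
      (∀ v : EuclideanSpace ℝ (Fin 2),
        IsHessEigen W (WithLp.toLp 2 ![v, -v, v, -v])
          (4 * (deriv W 1 + deriv (deriv W) 1))) ∧
      IsHessEigen W unitSquare
        (2 * deriv W 1 + 4 * deriv W 2 + 4 * deriv (deriv W) 1 + 16 * deriv (deriv W) 2) ∧
      IsHessEigen W (WithLp.toLp 2 ![unitSquare 1, unitSquare 2, unitSquare 3, unitSquare 0])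
        (2 * deriv W 1 + 4 * deriv W 2) ∧
      IsHessEigen W (WithLp.toLp 2 ![unitSquare 3, unitSquare 2, unitSquare 1, unitSquare 0])
        (2 * deriv W 1 + 4 * deriv W 2 + 4 * deriv (deriv W) 1) ∧
      IsHessEigen W (WithLp.toLp 2 ![unitSquare 0, unitSquare 3, unitSquare 2, unitSquare 1])
        (2 * deriv W 1 + 4 * deriv W 2 + 16 * deriv (deriv W) 2) := by
  have hA : deriv W 1 = -(2 * deriv W 2) := by linarith
  have key : ∀ u : Config4, ∀ lam : ℝ, (∀ w : Config4,
      Hq W u w = lam * ⟪u, w⟫) → IsHessEigen W u lam := by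
    intro u lam h w
    unfold hess4
    rw [fderiv2_energy4 hW]
    exact h w
  refine ⟨?_, ?_, ?_, ?_, ?_, ?_⟩
  · intro v
    refine key _ _ fun w => ?_
    rw [innerC]
    simp only [Hq, ContinuousLinearMap.add_apply, ContinuousLinearMap.coe_smul',
      Pi.smul_apply, ContinuousLinearMap.smul_apply, hessPair_apply,
      rn01, rn12, rn23, rn30, rn02, rn13, Lpair_apply, smul_eq_mul, inner2, E2_sub_apply,
      E2_neg_apply, us00, us01, us10, us11, us20, us21, us30, us31]
    rw [hA]; ring
  · intro v
    refine key _ _ fun w => ?_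
    rw [innerC]
    simp only [Hq, ContinuousLinearMap.add_apply, ContinuousLinearMap.coe_smul',
      Pi.smul_apply, ContinuousLinearMap.smul_apply, hessPair_apply,
      rn01, rn12, rn23, rn30, rn02, rn13, Lpair_apply, smul_eq_mul, inner2, E2_sub_apply,
      E2_neg_apply, us00, us01, us10, us11, us20, us21, us30, us31,
      Matrix.cons_val_zero, Matrix.cons_val_one, Matrix.head_cons, Matrix.cons_val_two,
      Matrix.cons_val_three, Matrix.tail_cons]
    rw [hA]; ring
  · refine key _ _ fun w => ?_
    rw [innerC]
    simp only [Hq, ContinuousLinearMap.add_apply, ContinuousLinearMap.coe_smul',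
      Pi.smul_apply, ContinuousLinearMap.smul_apply, hessPair_apply,
      rn01, rn12, rn23, rn30, rn02, rn13, Lpair_apply, smul_eq_mul, inner2, E2_sub_apply,
      E2_neg_apply, us00, us01, us10, us11, us20, us21, us30, us31]
    rw [hA]; ring
  · refine key _ _ fun w => ?_
    rw [innerC]
    simp only [Hq, ContinuousLinearMap.add_apply, ContinuousLinearMap.coe_smul',
      Pi.smul_apply, ContinuousLinearMap.smul_apply, hessPair_apply,
      rn01, rn12, rn23, rn30, rn02, rn13, Lpair_apply, smul_eq_mul, inner2, E2_sub_apply,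
      E2_neg_apply, Matrix.cons_val_zero, Matrix.cons_val_one, Matrix.head_cons,
      Matrix.cons_val_two, Matrix.cons_val_three, Matrix.tail_cons,
      us00, us01, us10, us11, us20, us21, us30, us31]
    rw [hA]; ring
  · refine key _ _ fun w => ?_
    rw [innerC]
    simp only [Hq, ContinuousLinearMap.add_apply, ContinuousLinearMap.coe_smul',
      Pi.smul_apply, ContinuousLinearMap.smul_apply, hessPair_apply,
      rn01, rn12, rn23, rn30, rn02, rn13, Lpair_apply, smul_eq_mul, inner2, E2_sub_apply,
      E2_neg_apply, Matrix.cons_val_zero, Matrix.cons_val_one, Matrix.head_cons,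
      Matrix.cons_val_two, Matrix.cons_val_three, Matrix.tail_cons,
      us00, us01, us10, us11, us20, us21, us30, us31]
    rw [hA]; ring
  · refine key _ _ fun w => ?_
    rw [innerC]
    simp only [Hq, ContinuousLinearMap.add_apply, ContinuousLinearMap.coe_smul',
      Pi.smul_apply, ContinuousLinearMap.smul_apply, hessPair_apply,
      rn01, rn12, rn23, rn30, rn02, rn13, Lpair_apply, smul_eq_mul, inner2, E2_sub_apply,
      E2_neg_apply, Matrix.cons_val_zero, Matrix.cons_val_one, Matrix.head_cons,
      Matrix.cons_val_two, Matrix.cons_val_three, Matrix.tail_cons,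
      us00, us01, us10, us11, us20, us21, us30, us31]
    rw [hA]; ring
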